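/- Let q be a Lie algebra over a field k of characteristic 0 and let N : q → q be a Nijenhuis operator. Then for every integer n ≥ 0 and all x, y ∈ q: Σ_{k+i+j=n} (−1)^k · (n! / (k!·i!·j!)) · N^k([N^i x, N^j y]) = [N^n x, y] + [x, N^n y] − N^n([x,y]), where the sum ranges over all triples (k,i,j) of nonnegative integers with k + i + j = n and N^0 = id. -/

import Mathlib

open Finset

private lemma tri_dvd {R : Type*} [CommRing R] (a b c : R) (n : ℕ) :
    (a - c) * (b - c) ∣ (a + b - c) ^ n - a ^ n - b ^ n + c ^ n := by
  induction n with
  | zero => simp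
  | succ n ih =>
    have key : (a + b - c) ^ (n + 1) - a ^ (n + 1) - b ^ (n + 1) + c ^ (n + 1)
        = (a + b - c) * ((a + b - c) ^ n - a ^ n - b ^ n + c ^ n)
          + ((a - c) * (b ^ n - c ^ n) + (b - c) * (a ^ n - c ^ n)) := by ring
    rw [key]
    refine dvd_add (ih.mul_left _) (dvd_add ?_ ?_)
    · exact mul_dvd_mul_left _ (sub_dvd_pow_sub_pow b c n)
    · rw [mul_comm (a - c) (b - c)]
      exact mul_dvd_mul_left _ (sub_dvd_pow_sub_pow a c n)

section ops

variable {k : Type*} [Field k] {L : Type*} [LieRing L] [LieAlgebra k L] (N : L →ₗ[k] L)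

private def opA : Module.End k (L → L → L) where
  toFun φ := fun x y => φ (N x) y
  map_add' _ _ := rfl
  map_smul' _ _ := rfl

private def opB : Module.End k (L → L → L) where
  toFun φ := fun x y => φ x (N y)
  map_add' _ _ := rfl
  map_smul' _ _ := rfl

private def opC : Module.End k (L → L → L) where
  toFun φ := fun x y => N (φ x y)
  map_add' φ ψ := by funext x y; exact N.map_add _ _
  map_smul' c φ := by funext x y; exact N.map_smul c _

private lemma opA_pow : ∀ (i : ℕ) (φ : L → L → L) (x y : L),
    ((opA N ^ i) φ) x y = φ ((⇑N)^[i] x) y := by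
  intro i
  induction i with
  | zero => intro φ x y; simp
  | succ i ih =>
    intro φ x y
    rw [pow_succ, Module.End.mul_apply, ih, Function.iterate_succ_apply']
    rfl

private lemma opB_pow : ∀ (i : ℕ) (φ : L → L → L) (x y : L),
    ((opB N ^ i) φ) x y = φ x ((⇑N)^[i] y) := by
  intro i
  induction i with
  | zero => intro φ x y; simp
  | succ i ih =>
    intro φ x y
    rw [pow_succ, Module.End.mul_apply, ih, Function.iterate_succ_apply']
    rfl

private lemma opC_pow : ∀ (i : ℕ) (φ : L → L → L) (x y : L),
    ((opC N ^ i) φ) x y = (⇑N)^[i] (φ x y) := by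
  intro i
  induction i with
  | zero => intro φ x y; simp
  | succ i ih =>
    intro φ x y
    rw [pow_succ, Module.End.mul_apply, ih, Function.iterate_succ_apply]
    rfl

private lemma hAB : Commute (opA N) (opB N) := LinearMap.ext fun _ => rfl
private lemma hAC : Commute (opA N) (opC N) := LinearMap.ext fun _ => rfl
private lemma hBC : Commute (opB N) (opC N) := LinearMap.ext fun _ => rfl

private lemma hzero (hN : ∀ x y : L, N (⁅N x, y⁆ + ⁅x, N y⁆ - N ⁅x, y⁆) = ⁅N x, N y⁆) :
    ((opA N - opC N) * (opB N - opC N)) (fun x y : L => ⁅x, y⁆) = 0 := by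
  rw [Module.End.mul_apply]
  funext x y
  simp only [LinearMap.sub_apply, opA, opB, opC, LinearMap.coe_mk, AddHom.coe_mk,
    Pi.sub_apply, Pi.zero_apply]
  rw [← hN x y]
  simp only [map_sub, map_add]
  abel

private lemma key_op (hN : ∀ x y : L, N (⁅N x, y⁆ + ⁅x, N y⁆ - N ⁅x, y⁆) = ⁅N x, N y⁆)
    (n : ℕ) :
    ((opA N + opB N - opC N) ^ n) (fun x y : L => ⁅x, y⁆)
      = ((opA N) ^ n + (opB N) ^ n - (opC N) ^ n) (fun x y : L => ⁅x, y⁆) := by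
  set A := opA N with hA'
  set B := opB N with hB'
  set C := opC N with hC'
  have hcomm : ∀ x ∈ ({A, B, C} : Set (Module.End k (L → L → L))),
      ∀ y ∈ ({A, B, C} : Set (Module.End k (L → L → L))), x * y = y * x := by
    rintro x hx y hy
    simp only [Set.mem_insert_iff, Set.mem_singleton_iff] at hx hy
    rcases hx with rfl | rfl | rfl <;> rcases hy with rfl | rfl | rfl <;> rfl
  letI : CommRing (Subring.closure ({A, B, C} : Set (Module.End k (L → L → L)))) :=
    Subring.closureCommRingOfComm hcomm
  have hAm : A ∈ Subring.closure ({A, B, C} : Set (Module.End k (L → L → L))) :=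
    Subring.subset_closure (by simp)
  have hBm : B ∈ Subring.closure ({A, B, C} : Set (Module.End k (L → L → L))) :=
    Subring.subset_closure (by simp)
  have hCm : C ∈ Subring.closure ({A, B, C} : Set (Module.End k (L → L → L))) :=
    Subring.subset_closure (by simp)
  obtain ⟨h, hh⟩ := tri_dvd (⟨A, hAm⟩ : Subring.closure ({A, B, C} : Set _))
    ⟨B, hBm⟩ ⟨C, hCm⟩ n
  rw [mul_comm] at hh
  have hh2 := congrArg
    (Subtype.val : Subring.closure ({A, B, C} : Set (Module.End k (L → L → L))) →
      Module.End k (L → L → L)) hh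
  push_cast at hh2
  have hh3 := LinearMap.congr_fun hh2 (fun x y : L => ⁅x, y⁆)
  rw [Module.End.mul_apply, hzero N hN, map_zero] at hh3
  simp only [LinearMap.add_apply, LinearMap.sub_apply] at hh3 ⊢
  have goal := sub_eq_zero.mp (by rw [← hh3]; abel :
    ((A + B - C) ^ n) (fun x y : L => ⁅x, y⁆)
      - ((A ^ n) (fun x y : L => ⁅x, y⁆) + (B ^ n) (fun x y : L => ⁅x, y⁆)
        - (C ^ n) (fun x y : L => ⁅x, y⁆)) = 0)
  exact goal

end ops

section eval

variable {k : Type*} [Field k] {L : Type*} [LieRing L] [LieAlgebra k L] (N : L →ₗ[k] L)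

private lemma ab_eval (m : ℕ) (x y : L) :
    (((opA N + opB N) ^ m) (fun x y : L => ⁅x, y⁆)) x y
      = ∑ q ∈ antidiagonal m, m.choose q.1 • ⁅(⇑N)^[q.1] x, (⇑N)^[q.2] y⁆ := by
  rw [(hAB N).add_pow']
  simp only [LinearMap.sum_apply, Finset.sum_apply, LinearMap.smul_apply, Pi.smul_apply,
    Module.End.mul_apply]
  refine Finset.sum_congr rfl fun q hq => ?_
  rw [opA_pow, opB_pow]

private lemma lhs_eval (n : ℕ) (x y : L) :
    (((opA N + opB N - opC N) ^ n) (fun x y : L => ⁅x, y⁆)) x y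
      = ∑ p ∈ antidiagonal n, ∑ q ∈ antidiagonal p.2,
          ((-1 : k) ^ p.1 * ((n.choose p.1 * p.2.choose q.1 : ℕ) : k))
            • (⇑N)^[p.1] ⁅(⇑N)^[q.1] x, (⇑N)^[q.2] y⁆ := by
  have hstep : opA N + opB N - opC N = -opC N + (opA N + opB N) := by abel
  have hc : Commute (-opC N) (opA N + opB N) :=
    ((hAC N).symm.neg_left.add_right (hBC N).symm.neg_left)
  have hnegC : ∀ m : ℕ, (-opC N) ^ m = ((-1 : k) ^ m) • (opC N) ^ m := by
    intro m
    rw [← neg_one_smul k (opC N), smul_pow]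
  rw [hstep, hc.add_pow']
  simp only [LinearMap.sum_apply, Finset.sum_apply, LinearMap.smul_apply, Pi.smul_apply,
    Module.End.mul_apply, hnegC]
  refine Finset.sum_congr rfl fun p hp => ?_
  rw [opC_pow]
  have inner : (((opA N + opB N) ^ p.2) (fun x y : L => ⁅x, y⁆)) x y
      = ∑ q ∈ antidiagonal p.2, p.2.choose q.1 • ⁅(⇑N)^[q.1] x, (⇑N)^[q.2] y⁆ :=
    ab_eval N p.2 x y
  rw [inner]
  rw [← Module.End.pow_apply, map_sum, Finset.smul_sum, Finset.smul_sum]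
  refine Finset.sum_congr rfl fun q hq => ?_
  rw [map_nsmul, Module.End.pow_apply]
  rw [← Nat.cast_smul_eq_nsmul k (n.choose p.1), ← Nat.cast_smul_eq_nsmul k (p.2.choose q.1),
    smul_smul, smul_smul]
  congr 1
  push_cast
  ring

private lemma rhs_eval (n : ℕ) (x y : L) :
    (((opA N) ^ n + (opB N) ^ n - (opC N) ^ n) (fun x y : L => ⁅x, y⁆)) x y
      = ⁅(⇑N)^[n] x, y⁆ + ⁅x, (⇑N)^[n] y⁆ - (⇑N)^[n] ⁅x, y⁆ := by
  simp only [LinearMap.add_apply, LinearMap.sub_apply, Pi.add_apply, Pi.sub_apply,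
    opA_pow, opB_pow, opC_pow]

end eval

private lemma coeff_eq {kk m i j n : ℕ} (h1 : kk + m = n) (h2 : i + j = m) :
    n.factorial / (kk.factorial * i.factorial * j.factorial) = n.choose kk * m.choose i := by
  have e1 : n.choose kk * kk.factorial * m.factorial = n.factorial := by
    have := Nat.choose_mul_factorial_mul_factorial (show kk ≤ n by omega)
    rwa [show n - kk = m by omega] at this
  have e2 : m.choose i * i.factorial * j.factorial = m.factorial := by
    have := Nat.choose_mul_factorial_mul_factorial (show i ≤ m by omega)
    rwa [show m - i = j by omega] at this
  refine Nat.div_eq_of_eq_mul_left ?_ ?_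
  · positivity
  · rw [← e1, ← e2]; ring

/-- For a Nijenhuis operator `N` on a Lie algebra over a field of characteristic zero,
for every `n ≥ 0`:
`Σ_{k+i+j=n} (−1)^k (n!/(k!·i!·j!)) N^k([N^i x, N^j y])
  = [N^n x, y] + [x, N^n y] − N^n([x,y])`. -/
theorem nijenhuis_exponential_identity
    {k : Type*} [Field k] [CharZero k] {L : Type*} [LieRing L] [LieAlgebra k L]
    (N : L →ₗ[k] L)
    (hN : ∀ x y : L, N (⁅N x, y⁆ + ⁅x, N y⁆ - N ⁅x, y⁆) = ⁅N x, N y⁆) :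
    ∀ (n : ℕ) (x y : L),
      ∑ p ∈ Finset.HasAntidiagonal.antidiagonal n, ∑ q ∈ Finset.HasAntidiagonal.antidiagonal p.2,
        ((-1 : k) ^ p.1
          * ((Nat.factorial n
              / (Nat.factorial p.1 * Nat.factorial q.1 * Nat.factorial q.2) : ℕ) : k))
          • (⇑N)^[p.1] ⁅(⇑N)^[q.1] x, (⇑N)^[q.2] y⁆
        = ⁅(⇑N)^[n] x, y⁆ + ⁅x, (⇑N)^[n] y⁆ - (⇑N)^[n] ⁅x, y⁆ := by
  intro n x y
  have step1 : ∑ p ∈ Finset.HasAntidiagonal.antidiagonal n, ∑ q ∈ Finset.HasAntidiagonal.antidiagonal p.2,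
        ((-1 : k) ^ p.1
          * ((Nat.factorial n
              / (Nat.factorial p.1 * Nat.factorial q.1 * Nat.factorial q.2) : ℕ) : k))
          • (⇑N)^[p.1] ⁅(⇑N)^[q.1] x, (⇑N)^[q.2] y⁆
      = ∑ p ∈ antidiagonal n, ∑ q ∈ antidiagonal p.2,
          ((-1 : k) ^ p.1 * ((n.choose p.1 * p.2.choose q.1 : ℕ) : k))
            • (⇑N)^[p.1] ⁅(⇑N)^[q.1] x, (⇑N)^[q.2] y⁆ := by
    refine Finset.sum_congr rfl fun p hp => Finset.sum_congr rfl fun q hq => ?_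
    rw [Finset.HasAntidiagonal.mem_antidiagonal] at hp hq
    rw [coeff_eq hp hq]
  rw [step1, ← lhs_eval, key_op N hN n, rhs_eval]
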